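/- Let V be a real Hilbert space, 0 ≤ μ ≤ L with L > 0, let f ∈ S^{1,1}_{μ,L}, let g : V → ℝ be convex, F = f + g, and let x* be a global minimizer of F. Under the OAG Method-I iteration (γ_0 > 0; L·α_k² = γ_k(1 + α_k) with α_k > 0; γ_{k+1} = (γ_k + μα_k)/(1 + α_k); y_k = (x_k + α_k v_k)/(1 + α_k); G_k satisfying g(z) ≥ g(y_k − G_k/L) + ⟨G_k − ∇f(y_k), z − (y_k − G_k/L)⟩ for all z ∈ V; x_{k+1} = y_k − (1/L)G_k; v_{k+1} = (γ_k v_k + μα_k y_k − α_k G_k)/(γ_k + μα_k)), the Lyapunov function 𝓛_k = F(x_k) − F(x*) + (γ_k/2)‖v_k − x*‖² satisfies, for all k ≥ 0: 𝓛_k ≤ 𝓛_0 · min{ 4L/(√γ_0·k + 2√L)², (1 + √(min{γ_0, μ}/L))^{−k} }; and if γ_0 ≥ L, for all k ≥ 1: 𝓛_k ≤ (F(x_0) − F(x*) + (L/2)‖v_0 − x*‖²) · min{ 4/k², (1 + √(μ/L))^{1−k} }. -/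

import Mathlib

open RealInnerProductSpace

lemma key_alg {V : Type*} [NormedAddCommGroup V] [InnerProductSpace ℝ V]
    (γ α L μ : ℝ) (hγ : 0 < γ) (hα : 0 < α) (hL : 0 < L) (hμ : 0 ≤ μ)
    (hstep : L * α ^ 2 = γ * (1 + α)) (a b G w : V)
    (hw : (γ + μ * α) • w = γ • a + (μ * α) • b - α • G) :
    α * ⟪G, a⟫ - (1 + α) / (2 * L) * ‖G‖ ^ 2 - μ * α / 2 * ‖b‖ ^ 2
      + (γ + μ * α) / 2 * ‖w‖ ^ 2 ≤ γ / 2 * ‖a‖ ^ 2 := by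
  have hβpos : 0 < γ + μ * α := by nlinarith
  have huu : (γ + μ * α) ^ 2 * ⟪w, w⟫ =
      γ ^ 2 * ⟪a, a⟫ + (μ * α) ^ 2 * ⟪b, b⟫ + α ^ 2 * ⟪G, G⟫
        + 2 * (γ * (μ * α)) * ⟪a, b⟫ - 2 * (γ * α) * ⟪G, a⟫
        - 2 * ((μ * α) * α) * ⟪G, b⟫ := by
    have h0 : ((γ + μ * α) ^ 2 * ⟪w, w⟫ : ℝ) = ⟪(γ + μ * α) • w, (γ + μ * α) • w⟫ := by
      rw [real_inner_smul_left, real_inner_smul_right]; ring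
    rw [h0, hw]
    simp only [inner_sub_left, inner_sub_right, inner_add_left, inner_add_right,
      real_inner_smul_left, real_inner_smul_right, real_inner_comm b a,
      real_inner_comm a G, real_inner_comm b G]
    ring
  have hD : (⟪α • G - γ • (a - b), α • G - γ • (a - b)⟫ : ℝ) =
      α ^ 2 * ⟪G, G⟫ + γ ^ 2 * (⟪a, a⟫ - 2 * ⟪a, b⟫ + ⟪b, b⟫)
        - 2 * (α * γ) * (⟪G, a⟫ - ⟪G, b⟫) := by
    simp only [inner_sub_left, inner_sub_right, smul_sub,
      real_inner_smul_left, real_inner_smul_right, real_inner_comm b a,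
      real_inner_comm a G, real_inner_comm b G]
    ring
  have hdd : (0:ℝ) ≤ ⟪α • G - γ • (a - b), α • G - γ • (a - b)⟫ := real_inner_self_nonneg
  simp only [← real_inner_self_eq_norm_sq]
  have h2 : (0:ℝ) < 2 * γ * (γ + μ * α) := by nlinarith
  rw [← mul_le_mul_iff_right₀ h2]
  have e1 : 2 * γ * (γ + μ * α) * ((1 + α) / (2 * L) * ⟪G, G⟫)
      = (γ + μ * α) * α ^ 2 * ⟪G, G⟫ := by
    have hq : (1 + α) / (2 * L) = α ^ 2 / (2 * γ) := by
      rw [div_eq_div_iff (by positivity) (by positivity)]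
      linear_combination (-2 : ℝ) * hstep
    rw [hq, div_mul_eq_mul_div, mul_div_assoc', div_eq_iff (by positivity)]
    ring
  nlinarith [huu, hD, hdd, e1, mul_nonneg (mul_nonneg hμ hα.le) hdd]

lemma descent_aux {V : Type*} [NormedAddCommGroup V] [InnerProductSpace ℝ V] [CompleteSpace V]
    (L : ℝ) (hL : 0 < L) (f : V → ℝ) (f' : V → V)
    (hdiff : ∀ z, HasGradientAt f (f' z) z)
    (hlip : ∀ z w : V, ‖f' z - f' w‖ ≤ L * ‖z - w‖) (z w : V) :
    f z ≤ f w + ⟪f' w, z - w⟫ + L / 2 * ‖z - w‖ ^ 2 := by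
  set u := z - w with hu
  have hline : ∀ t : ℝ, HasDerivAt (fun s : ℝ => w + s • u) u t := fun t => by
    simpa using ((hasDerivAt_id t).smul_const u).const_add w
  have hphi : ∀ t : ℝ, HasDerivAt (fun s : ℝ => f (w + s • u)) ⟪f' (w + t • u), u⟫ t := by
    intro t
    have h1 := ((hdiff (w + t • u)).hasFDerivAt).comp_hasDerivAt t (hline t)
    simp at h1
    exact h1
  have hfc : Continuous f' := by
    have : LipschitzWith (Real.toNNReal L) f' := by
      apply LipschitzWith.of_dist_le_mul
      intro a b
      rw [dist_eq_norm, dist_eq_norm, Real.coe_toNNReal L hL.le]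
      exact hlip a b
    exact this.continuous
  have hcont : Continuous fun t : ℝ => (⟪f' (w + t • u), u⟫ : ℝ) := by
    exact (Continuous.inner (hfc.comp (continuous_const.add (continuous_id.smul continuous_const))) continuous_const)
  have hint : ∫ t in (0:ℝ)..1, ⟪f' (w + t • u), u⟫ = f (w + (1:ℝ) • u) - f (w + (0:ℝ) • u) := by
    exact intervalIntegral.integral_eq_sub_of_hasDerivAt (fun t _ => hphi t)
      (hcont.intervalIntegrable 0 1)
  have hmono : ∫ t in (0:ℝ)..1, ⟪f' (w + t • u), u⟫ ≤
      ∫ t in (0:ℝ)..1, (⟪f' w, u⟫ + (L * ‖u‖ ^ 2) * t) := by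
    apply intervalIntegral.integral_mono_on (by norm_num) (hcont.intervalIntegrable 0 1)
      ((Continuous.intervalIntegrable (by continuity) 0 1))
    intro t ht
    have h2 : ⟪f' (w + t • u) - f' w, u⟫ ≤ ‖f' (w + t • u) - f' w‖ * ‖u‖ :=
      real_inner_le_norm _ _
    have h3 : ‖f' (w + t • u) - f' w‖ ≤ L * (t * ‖u‖) := by
      have := hlip (w + t • u) w
      simpa [norm_smul, Real.norm_eq_abs, abs_of_nonneg ht.1] using this
    have h4 : ⟪f' (w + t • u), u⟫ - ⟪f' w, u⟫ = ⟪f' (w + t • u) - f' w, u⟫ := by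
      rw [inner_sub_left]
    nlinarith [norm_nonneg u, h2, h3, mul_le_mul_of_nonneg_right h3 (norm_nonneg u)]
  have hval : ∫ t in (0:ℝ)..1, (⟪f' w, u⟫ + (L * ‖u‖ ^ 2) * t) = ⟪f' w, u⟫ + L / 2 * ‖u‖ ^ 2 := by
    rw [intervalIntegral.integral_add (intervalIntegrable_const)
      ((by continuity : Continuous (fun t : ℝ => (L * ‖u‖ ^ 2) * t)).intervalIntegrable 0 1)]
    rw [intervalIntegral.integral_const_mul, integral_id]
    simp
    ring
  have h10 : w + (1:ℝ) • u = z := by simp [hu]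
  have h00 : w + (0:ℝ) • u = w := by simp
  rw [h10, h00] at hint
  linarith [hint ▸ hmono, hval ▸ hmono]


lemma onestep {V : Type*} [NormedAddCommGroup V] [InnerProductSpace ℝ V] [CompleteSpace V]
    (μ L γk γk1 αk : ℝ) (hμ : 0 ≤ μ) (hL : 0 < L) (hγ : 0 < γk) (hα : 0 < αk)
    (hstep : L * αk ^ 2 = γk * (1 + αk)) (hγrec : γk1 = (γk + μ * αk) / (1 + αk))
    (f : V → ℝ) (f' : V → V) (g : V → ℝ)
    (hdiff : ∀ z, HasGradientAt f (f' z) z)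
    (hconv : ∀ z w : V, f z - f w - ⟪f' w, z - w⟫ ≥ μ / 2 * ‖z - w‖ ^ 2)
    (hlip : ∀ z w : V, ‖f' z - f' w‖ ≤ L * ‖z - w‖)
    (xstar xk yk vk xk1 vk1 Gk : V)
    (hy : (1 + αk) • yk = xk + αk • vk)
    (hG : ∀ z : V, g z ≥ g (yk - (1 / L) • Gk) + ⟪Gk - f' yk, z - (yk - (1 / L) • Gk)⟫)
    (hx1 : xk1 = yk - (1 / L) • Gk)
    (hv1 : (γk + μ * αk) • vk1 = γk • vk + (μ * αk) • yk - αk • Gk) :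
    ((f xk1 + g xk1) - (f xstar + g xstar) + γk1 / 2 * ‖vk1 - xstar‖ ^ 2) * (1 + αk) ≤
      (f xk + g xk) - (f xstar + g xstar) + γk / 2 * ‖vk - xstar‖ ^ 2 := by
  have hone : (0:ℝ) < 1 + αk := by linarith
  -- Step A
  have sA : ∀ z : V, f xk1 + g xk1 ≤ f z + g z + ⟪Gk, yk - z⟫ - 1 / (2 * L) * ‖Gk‖ ^ 2
      - μ / 2 * ‖z - yk‖ ^ 2 := by
    intro z
    have hd := descent_aux L hL f f' hdiff hlip xk1 yk
    have hc := hconv z yk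
    have hgz := hG z
    rw [← hx1] at hgz
    have e0 : xk1 - yk = -((1 / L) • Gk) := by rw [hx1]; abel
    have eB : (⟪f' yk, xk1 - yk⟫ : ℝ) = -((1 / L) * ⟪f' yk, Gk⟫) := by
      rw [e0, inner_neg_right, real_inner_smul_right]
    have eC : ‖xk1 - yk‖ ^ 2 = (1 / L) ^ 2 * ‖Gk‖ ^ 2 := by
      rw [e0, norm_neg, norm_smul]
      rw [Real.norm_eq_abs, abs_of_nonneg (by positivity : (0:ℝ) ≤ 1 / L)]
      ring
    have eA : (⟪Gk - f' yk, z - xk1⟫ : ℝ) =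
        ⟪Gk, z - yk⟫ + (1 / L) * ⟪Gk, Gk⟫ - ⟪f' yk, z - yk⟫ - (1 / L) * ⟪f' yk, Gk⟫ := by
      have e1 : z - xk1 = (z - yk) + (1 / L) • Gk := by rw [hx1]; abel
      rw [e1]
      simp only [inner_add_right, inner_sub_left, real_inner_smul_right]
      ring
    have eG : (⟪Gk, Gk⟫ : ℝ) = ‖Gk‖ ^ 2 := real_inner_self_eq_norm_sq Gk
    have eD : (⟪Gk, yk - z⟫ : ℝ) = -⟪Gk, z - yk⟫ := by
      rw [← inner_neg_right]; congr 1; abel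
    have eL : L / 2 * ((1 / L) ^ 2 * ‖Gk‖ ^ 2) = 1 / (2 * L) * ‖Gk‖ ^ 2 := by
      field_simp
    rw [eB, eC, eL] at hd
    rw [eA, eG] at hgz
    rw [eD]
    have eH : 1 / L * ‖Gk‖ ^ 2 = 2 * (1 / (2 * L) * ‖Gk‖ ^ 2) := by ring
    linarith [hd, hc, hgz, eH]
  -- combine
  have h1 := sA xk
  have h2 := mul_le_mul_of_nonneg_left (sA xstar) hα.le
  have hvec : (yk - xk) + αk • (yk - xstar) = αk • (vk - xstar) := by
    have hx : xk = (1 + αk) • yk - αk • vk := by rw [hy]; abel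
    rw [hx]
    module
  have comb : (⟪Gk, yk - xk⟫ : ℝ) + αk * ⟪Gk, yk - xstar⟫ = αk * ⟪Gk, vk - xstar⟫ := by
    rw [← real_inner_smul_right, ← inner_add_right, hvec, real_inner_smul_right]
  have hw : (γk + μ * αk) • (vk1 - xstar) =
      γk • (vk - xstar) + (μ * αk) • (yk - xstar) - αk • Gk := by
    rw [smul_sub, hv1]
    module
  have key := key_alg γk αk L μ hγ hα hL hμ hstep (vk - xstar) (yk - xstar) Gk
    (vk1 - xstar) hw
  have hb : ‖xstar - yk‖ ^ 2 = ‖yk - xstar‖ ^ 2 := by rw [norm_sub_rev]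
  have hμx : 0 ≤ μ / 2 * ‖xk - yk‖ ^ 2 := by positivity
  have hγ1 : γk1 * (1 + αk) * (‖vk1 - xstar‖ ^ 2 / 2) =
      (γk + μ * αk) * (‖vk1 - xstar‖ ^ 2 / 2) := by
    rw [hγrec]; field_simp
  have hb2 : μ * αk / 2 * ‖xstar - yk‖ ^ 2 = μ * αk / 2 * ‖yk - xstar‖ ^ 2 := by rw [hb]
  have eK : (1 + αk) / (2 * L) * ‖Gk‖ ^ 2 = 1 / (2 * L) * ‖Gk‖ ^ 2
      + αk * (1 / (2 * L) * ‖Gk‖ ^ 2) := by ring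
  nlinarith [h1, h2, comb, key, hb2, hμx, hγ1, eK]
set_option maxHeartbeats 2000000 in
theorem stmt14 {V : Type*} [NormedAddCommGroup V] [InnerProductSpace ℝ V] [CompleteSpace V]
    (μ L : ℝ) (hμ : 0 ≤ μ) (hμL : μ ≤ L) (hL : 0 < L) (f : V → ℝ) (f' : V → V)
    (hdiff : ∀ z, HasGradientAt f (f' z) z)
    (hconv : ∀ z w : V, f z - f w - ⟪f' w, z - w⟫ ≥ μ / 2 * ‖z - w‖ ^ 2)
    (hlip : ∀ z w : V, ‖f' z - f' w‖ ≤ L * ‖z - w‖)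
    (g : V → ℝ) (hg : ConvexOn ℝ Set.univ g)
    (xstar : V) (hmin : ∀ z, f xstar + g xstar ≤ f z + g z)
    (γ α : ℕ → ℝ) (hγ0 : 0 < γ 0) (hα : ∀ k, 0 < α k)
    (hstep : ∀ k, L * (α k) ^ 2 = γ k * (1 + α k))
    (x y v G : ℕ → V)
    (hγrec : ∀ k, γ (k + 1) = (γ k + μ * α k) / (1 + α k))
    (hyrec : ∀ k, (1 + α k) • y k = x k + α k • v k)
    (hG : ∀ k, ∀ z : V, g z ≥ g (y k - (1 / L) • G k) +
      ⟪G k - f' (y k), z - (y k - (1 / L) • G k)⟫)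
    (hxrec : ∀ k, x (k + 1) = y k - (1 / L) • G k)
    (hvrec : ∀ k, (γ k + μ * α k) • v (k + 1) =
      γ k • v k + (μ * α k) • y k - α k • G k) :
    (∀ k : ℕ,
      (f (x k) + g (x k)) - (f xstar + g xstar) + γ k / 2 * ‖v k - xstar‖ ^ 2 ≤
        ((f (x 0) + g (x 0)) - (f xstar + g xstar) + γ 0 / 2 * ‖v 0 - xstar‖ ^ 2) *
          min (4 * L / (Real.sqrt (γ 0) * k + 2 * Real.sqrt L) ^ 2)
            (((1 + Real.sqrt (min (γ 0) μ / L)) ^ k)⁻¹)) ∧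
    (γ 0 ≥ L → ∀ k : ℕ, 1 ≤ k →
      (f (x k) + g (x k)) - (f xstar + g xstar) + γ k / 2 * ‖v k - xstar‖ ^ 2 ≤
        ((f (x 0) + g (x 0)) - (f xstar + g xstar) + L / 2 * ‖v 0 - xstar‖ ^ 2) *
          min (4 / (k : ℝ) ^ 2) (((1 + Real.sqrt (μ / L)) ^ (k - 1))⁻¹)) := by
  have hone : ∀ k, (0:ℝ) < 1 + α k := fun k => by have := hα k; linarith
  have hγpos : ∀ k, 0 < γ k := by
    intro k
    induction k with
    | zero => exact hγ0
    | succ n ih =>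
      rw [hγrec n]
      exact div_pos (by nlinarith [hα n, mul_nonneg hμ (hα n).le]) (hone n)
  set LY : ℕ → ℝ := fun k =>
    (f (x k) + g (x k)) - (f xstar + g xstar) + γ k / 2 * ‖v k - xstar‖ ^ 2 with hLYdef
  have honestep : ∀ k, LY (k + 1) * (1 + α k) ≤ LY k := by
    intro k
    exact onestep μ L (γ k) (γ (k + 1)) (α k) hμ hL (hγpos k) (hα k) (hstep k) (hγrec k)
      f f' g hdiff hconv hlip xstar (x k) (y k) (v k) (x (k + 1)) (v (k + 1)) (G k)
      (hyrec k) (hG k) (hxrec k) (hvrec k)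
  have hLYnonneg : ∀ k, 0 ≤ LY k := by
    intro k
    have h1 := hmin (x k)
    have h2 : 0 ≤ γ k / 2 * ‖v k - xstar‖ ^ 2 := by
      have := hγpos k
      positivity
    simp only [hLYdef]
    linarith
  set lam : ℕ → ℝ := fun k => ∏ i ∈ Finset.range k, (1 + α i)⁻¹ with hlamdef
  have hlam0 : lam 0 = 1 := by simp [hlamdef]
  have hlamsucc : ∀ k, lam (k + 1) = lam k * (1 + α k)⁻¹ := by
    intro k; simp [hlamdef, Finset.prod_range_succ]; ring
  have hlampos : ∀ k, 0 < lam k := by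
    intro k
    apply Finset.prod_pos
    intro i _
    exact inv_pos.mpr (hone i)
  have hLYdeflam : ∀ k, LY k ≤ lam k * LY 0 := by
    intro k
    induction k with
    | zero => rw [hlam0, one_mul]
    | succ n ih =>
      have h1 := honestep n
      have h2 : LY (n + 1) ≤ LY n * (1 + α n)⁻¹ := by
        rw [← div_eq_mul_inv, le_div_iff₀ (hone n)]
        exact h1
      calc LY (n + 1) ≤ LY n * (1 + α n)⁻¹ := h2
        _ ≤ (lam n * LY 0) * (1 + α n)⁻¹ :=
            mul_le_mul_of_nonneg_right ih (inv_pos.mpr (hone n)).le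
        _ = lam (n + 1) * LY 0 := by rw [hlamsucc n]; ring
  have hγlam : ∀ k, γ 0 * lam k ≤ γ k := by
    intro k
    induction k with
    | zero => rw [hlam0, mul_one]
    | succ n ih =>
      rw [hγrec n, hlamsucc n, le_div_iff₀ (hone n)]
      have e : γ 0 * (lam n * (1 + α n)⁻¹) * (1 + α n) = γ 0 * lam n := by
        field_simp
        rw [mul_div_assoc, div_self (hone n).ne', mul_one]
      rw [e]
      nlinarith [mul_nonneg hμ (hα n).le]
  -- sqrt product bound
  have hsq : ∀ k : ℕ, (Real.sqrt (γ 0) * k + 2 * Real.sqrt L) * Real.sqrt (lam k)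
      ≤ 2 * Real.sqrt L := by
    intro k
    induction k with
    | zero => simp [hlam0]
    | succ n ih =>
      have hs1 : 1 ≤ Real.sqrt (1 + α n) := by
        have h := Real.sqrt_le_sqrt (show (1:ℝ) ≤ 1 + α n by linarith [hα n])
        simpa using h
      have hspos : (0:ℝ) < Real.sqrt (1 + α n) := by linarith
      have hs2 : Real.sqrt (1 + α n) ^ 2 = 1 + α n := Real.sq_sqrt (hone n).le
      have hq2 : Real.sqrt (lam n) ^ 2 = lam n := Real.sq_sqrt (hlampos n).le
      have hqpos : 0 < Real.sqrt (lam n) := Real.sqrt_pos.mpr (hlampos n)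
      have hαge : Real.sqrt (γ 0) * Real.sqrt (lam n) * Real.sqrt (1 + α n)
          ≤ Real.sqrt L * α n := by
        have e1 : Real.sqrt (γ 0) * Real.sqrt (lam n) * Real.sqrt (1 + α n)
            = Real.sqrt (γ 0 * lam n * (1 + α n)) := by
          rw [Real.sqrt_mul (mul_nonneg hγ0.le (hlampos n).le), Real.sqrt_mul hγ0.le]
        have e2 : Real.sqrt L * α n = Real.sqrt (L * α n ^ 2) := by
          rw [Real.sqrt_mul hL.le, Real.sqrt_sq (hα n).le]
        rw [e1, e2]
        apply Real.sqrt_le_sqrt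
        rw [hstep n]
        nlinarith [hγlam n, hone n]
      have key2 : Real.sqrt (γ 0) * Real.sqrt (lam n)
          ≤ 2 * Real.sqrt L * (Real.sqrt (1 + α n) - 1) := by
        have hfact : (Real.sqrt (1 + α n) - 1) * (Real.sqrt (1 + α n) + 1) = α n := by
          linear_combination hs2
        have h3 : Real.sqrt (γ 0) * Real.sqrt (lam n) * Real.sqrt (1 + α n)
            ≤ (2 * Real.sqrt L * (Real.sqrt (1 + α n) - 1)) * Real.sqrt (1 + α n) := by
          nlinarith [hαge, hfact, Real.sqrt_nonneg L, hs1,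
            mul_nonneg (Real.sqrt_nonneg L) (sq_nonneg (Real.sqrt (1 + α n) - 1))]
        exact (mul_le_mul_iff_left₀ hspos).mp h3
      have hlamsplit : Real.sqrt (lam (n + 1))
          = Real.sqrt (lam n) / Real.sqrt (1 + α n) := by
        rw [hlamsucc n, Real.sqrt_mul (hlampos n).le, Real.sqrt_inv, div_eq_mul_inv]
      rw [hlamsplit]
      push_cast
      rw [← mul_div_assoc, div_le_iff₀ hspos]
      nlinarith [ih, key2, hqpos, Real.sqrt_nonneg (γ 0)]
  have hXpos : ∀ k : ℕ, (0:ℝ) < Real.sqrt (γ 0) * k + 2 * Real.sqrt L := by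
    intro k
    have h1 : 0 < Real.sqrt L := Real.sqrt_pos.mpr hL
    have h2 : 0 ≤ Real.sqrt (γ 0) * k := by positivity
    linarith
  have hsub : ∀ k : ℕ, lam k ≤ 4 * L / (Real.sqrt (γ 0) * k + 2 * Real.sqrt L) ^ 2 := by
    intro k
    have hX := hXpos k
    have h1 : Real.sqrt (lam k) ≤ 2 * Real.sqrt L / (Real.sqrt (γ 0) * k + 2 * Real.sqrt L) := by
      rw [le_div_iff₀ hX]
      linarith [hsq k]
    have h2 := pow_le_pow_left₀ (Real.sqrt_nonneg (lam k)) h1 2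
    rw [Real.sq_sqrt (hlampos k).le] at h2
    calc lam k ≤ (2 * Real.sqrt L / (Real.sqrt (γ 0) * k + 2 * Real.sqrt L)) ^ 2 := h2
      _ = 4 * L / (Real.sqrt (γ 0) * k + 2 * Real.sqrt L) ^ 2 := by
          rw [div_pow]
          congr 1
          rw [mul_pow, Real.sq_sqrt hL.le]
          ring
  -- lower bounds on γ and α
  have hαlb : ∀ (c : ℝ), 0 ≤ c → (∀ k, c ≤ γ k) → ∀ k, Real.sqrt (c / L) ≤ α k := by
    intro c hc hcγ k
    have e : α k = Real.sqrt ((α k) ^ 2) := (Real.sqrt_sq (hα k).le).symm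
    rw [e]
    apply Real.sqrt_le_sqrt
    rw [div_le_iff₀ hL]
    have : c ≤ γ k * (1 + α k) := by
      calc c ≤ γ k := hcγ k
        _ ≤ γ k * (1 + α k) := le_mul_of_one_le_right (hγpos k).le (by linarith [hα k])
    nlinarith [hstep k]
  have hmlb : ∀ k, min (γ 0) μ ≤ γ k := by
    intro k
    induction k with
    | zero => exact min_le_left _ _
    | succ n ih =>
      rw [hγrec n, le_div_iff₀ (hone n)]
      have h1 : min (γ 0) μ ≤ μ := min_le_right _ _
      nlinarith [hα n]
  have hlin : ∀ k : ℕ, lam k ≤ ((1 + Real.sqrt (min (γ 0) μ / L)) ^ k)⁻¹ := by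
    have hmnn : 0 ≤ min (γ 0) μ := le_min hγ0.le hμ
    have hq := hαlb (min (γ 0) μ) hmnn hmlb
    have hqnn : 0 ≤ Real.sqrt (min (γ 0) μ / L) := Real.sqrt_nonneg _
    intro k
    induction k with
    | zero => simp [hlam0]
    | succ n ih =>
      rw [hlamsucc n, pow_succ, mul_inv]
      apply mul_le_mul ih _ (inv_pos.mpr (hone n)).le (by positivity)
      apply inv_anti₀ (by linarith)
      linarith [hq n]
  constructor
  · intro k
    have h1 : LY k ≤ lam k * LY 0 := hLYdeflam k
    have h2 : lam k ≤ min (4 * L / (Real.sqrt (γ 0) * k + 2 * Real.sqrt L) ^ 2)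
        (((1 + Real.sqrt (min (γ 0) μ / L)) ^ k)⁻¹) := le_min (hsub k) (hlin k)
    have h3 : lam k * LY 0 ≤ LY 0 * min (4 * L / (Real.sqrt (γ 0) * k + 2 * Real.sqrt L) ^ 2)
        (((1 + Real.sqrt (min (γ 0) μ / L)) ^ k)⁻¹) := by
      rw [mul_comm]
      exact mul_le_mul_of_nonneg_left h2 (hLYnonneg 0)
    have h4 := le_trans h1 h3
    simp only [hLYdef] at h4
    exact h4
  · intro hγ0L k hk
    have hE0 : 0 ≤ (f (x 0) + g (x 0)) - (f xstar + g xstar) := by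
      linarith [hmin (x 0)]
    have hr0 : (0:ℝ) ≤ ‖v 0 - xstar‖ ^ 2 := by positivity
    have hkpos : (1:ℝ) ≤ (k:ℝ) := by exact_mod_cast hk
    have hk2 : (0:ℝ) < (k:ℝ) ^ 2 := by positivity
    -- sublinear bound
    have hXL : Real.sqrt L * k ≤ Real.sqrt (γ 0) * k + 2 * Real.sqrt L := by
      have h1 : Real.sqrt L ≤ Real.sqrt (γ 0) := Real.sqrt_le_sqrt hγ0L
      have h2 : Real.sqrt L * k ≤ Real.sqrt (γ 0) * k :=
        mul_le_mul_of_nonneg_right h1 (by positivity)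
      have h3 : 0 ≤ 2 * Real.sqrt L := by positivity
      linarith
    have hX2a : L * (k:ℝ) ^ 2 ≤ (Real.sqrt (γ 0) * k + 2 * Real.sqrt L) ^ 2 := by
      have h1 := pow_le_pow_left₀ (by positivity : (0:ℝ) ≤ Real.sqrt L * k) hXL 2
      calc L * (k:ℝ) ^ 2 = (Real.sqrt L * k) ^ 2 := by
            rw [mul_pow, Real.sq_sqrt hL.le]
        _ ≤ _ := h1
    have hX2b : γ 0 * (k:ℝ) ^ 2 ≤ (Real.sqrt (γ 0) * k + 2 * Real.sqrt L) ^ 2 := by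
      have h0 : Real.sqrt (γ 0) * k ≤ Real.sqrt (γ 0) * k + 2 * Real.sqrt L := by
        have : (0:ℝ) ≤ 2 * Real.sqrt L := by positivity
        linarith
      have h1 := pow_le_pow_left₀ (by positivity : (0:ℝ) ≤ Real.sqrt (γ 0) * k) h0 2
      calc γ 0 * (k:ℝ) ^ 2 = (Real.sqrt (γ 0) * k) ^ 2 := by
            rw [mul_pow, Real.sq_sqrt hγ0.le]
        _ ≤ _ := h1
    have c1 : lam k ≤ 4 / (k:ℝ) ^ 2 := by
      calc lam k ≤ 4 * L / (Real.sqrt (γ 0) * k + 2 * Real.sqrt L) ^ 2 := hsub k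
        _ ≤ 4 * L / (L * (k:ℝ) ^ 2) :=
            div_le_div_of_nonneg_left (by linarith) (by positivity) hX2a
        _ = 4 / (k:ℝ) ^ 2 := by
            field_simp
    have c2 : lam k * γ 0 ≤ 4 * L / (k:ℝ) ^ 2 := by
      have h1 : lam k ≤ 4 * L / (γ 0 * (k:ℝ) ^ 2) := by
        calc lam k ≤ 4 * L / (Real.sqrt (γ 0) * k + 2 * Real.sqrt L) ^ 2 := hsub k
          _ ≤ 4 * L / (γ 0 * (k:ℝ) ^ 2) :=
              div_le_div_of_nonneg_left (by linarith) (by positivity) hX2b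
      have h2 := mul_le_mul_of_nonneg_right h1 hγ0.le
      calc lam k * γ 0 ≤ 4 * L / (γ 0 * (k:ℝ) ^ 2) * γ 0 := h2
        _ = 4 * L / (k:ℝ) ^ 2 := by
            field_simp
    have hsubfinal : LY k ≤ ((f (x 0) + g (x 0)) - (f xstar + g xstar)
        + L / 2 * ‖v 0 - xstar‖ ^ 2) * (4 / (k:ℝ) ^ 2) := by
      have h1 : LY k ≤ lam k * LY 0 := hLYdeflam k
      have h2 : lam k * LY 0 = lam k * ((f (x 0) + g (x 0)) - (f xstar + g xstar))
          + (lam k * γ 0) * (‖v 0 - xstar‖ ^ 2 / 2) := by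
        simp only [hLYdef]
        ring
      have h3 : lam k * ((f (x 0) + g (x 0)) - (f xstar + g xstar))
          ≤ (4 / (k:ℝ) ^ 2) * ((f (x 0) + g (x 0)) - (f xstar + g xstar)) :=
        mul_le_mul_of_nonneg_right c1 hE0
      have h4 : (lam k * γ 0) * (‖v 0 - xstar‖ ^ 2 / 2)
          ≤ (4 * L / (k:ℝ) ^ 2) * (‖v 0 - xstar‖ ^ 2 / 2) :=
        mul_le_mul_of_nonneg_right c2 (by positivity)
      calc LY k ≤ lam k * LY 0 := h1
        _ = lam k * ((f (x 0) + g (x 0)) - (f xstar + g xstar))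
            + (lam k * γ 0) * (‖v 0 - xstar‖ ^ 2 / 2) := h2
        _ ≤ (4 / (k:ℝ) ^ 2) * ((f (x 0) + g (x 0)) - (f xstar + g xstar))
            + (4 * L / (k:ℝ) ^ 2) * (‖v 0 - xstar‖ ^ 2 / 2) := add_le_add h3 h4
        _ = ((f (x 0) + g (x 0)) - (f xstar + g xstar)
            + L / 2 * ‖v 0 - xstar‖ ^ 2) * (4 / (k:ℝ) ^ 2) := by
            field_simp
    -- linear bound
    have hγμ : ∀ j, μ ≤ γ j := by
      intro j
      induction j with
      | zero => linarith
      | succ n ih =>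
        rw [hγrec n, le_div_iff₀ (hone n)]
        nlinarith [hα n]
    have hq2 := hαlb μ hμ hγμ
    have hqnn : 0 ≤ Real.sqrt (μ / L) := Real.sqrt_nonneg _
    have hLYdef1 : LY 1 ≤ (f (x 0) + g (x 0)) - (f xstar + g xstar)
        + L / 2 * ‖v 0 - xstar‖ ^ 2 := by
      have h1 := honestep 0
      have h2 : γ 0 ≤ L * (1 + α 0) := by nlinarith [hstep 0, hα 0, hone 0]
      have h3 : LY 0 = (f (x 0) + g (x 0)) - (f xstar + g xstar)
          + γ 0 / 2 * ‖v 0 - xstar‖ ^ 2 := by simp only [hLYdef]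
      have harith : ∀ E r c s lv : ℝ, 0 ≤ E → 0 ≤ r → 1 ≤ s → c ≤ L * s →
          lv * s ≤ E + c / 2 * r → lv ≤ E + L / 2 * r := by
        intro E r c s lv hE hr hs hc hlv
        have hs0 : (0:ℝ) < s := by linarith
        have hup : lv * s ≤ (E + L / 2 * r) * s := by
          nlinarith [mul_nonneg hE (show (0:ℝ) ≤ s - 1 by linarith),
            mul_le_mul_of_nonneg_right hc (show (0:ℝ) ≤ r / 2 by linarith)]
        exact le_of_mul_le_mul_right hup hs0
      exact harith _ _ (γ 0) (1 + α 0) (LY 1) hE0 hr0 (by linarith [hα 0]) h2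
        (by rw [← h3]; exact h1)
    have hlin2 : ∀ j : ℕ, LY (1 + j) ≤ LY 1 * ((1 + Real.sqrt (μ / L)) ^ j)⁻¹ := by
      intro j
      induction j with
      | zero => simp
      | succ n ih =>
        have h1 := honestep (1 + n)
        have h2 : LY (1 + (n + 1)) ≤ LY (1 + n) * (1 + α (1 + n))⁻¹ := by
          rw [← div_eq_mul_inv, le_div_iff₀ (hone (1 + n))]
          have e : 1 + (n + 1) = (1 + n) + 1 := by omega
          rw [e]
          exact h1
        have h3 : LY (1 + n) * (1 + α (1 + n))⁻¹ ≤ LY (1 + n) * (1 + Real.sqrt (μ / L))⁻¹ := by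
          apply mul_le_mul_of_nonneg_left _ (hLYnonneg (1 + n))
          apply inv_anti₀ (by linarith)
          linarith [hq2 (1 + n)]
        have h4 : LY (1 + n) * (1 + Real.sqrt (μ / L))⁻¹
            ≤ (LY 1 * ((1 + Real.sqrt (μ / L)) ^ n)⁻¹) * (1 + Real.sqrt (μ / L))⁻¹ :=
          mul_le_mul_of_nonneg_right ih (by positivity)
        calc LY (1 + (n + 1)) ≤ LY (1 + n) * (1 + α (1 + n))⁻¹ := h2
          _ ≤ LY (1 + n) * (1 + Real.sqrt (μ / L))⁻¹ := h3
          _ ≤ (LY 1 * ((1 + Real.sqrt (μ / L)) ^ n)⁻¹) * (1 + Real.sqrt (μ / L))⁻¹ := h4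
          _ = LY 1 * ((1 + Real.sqrt (μ / L)) ^ (n + 1))⁻¹ := by
              rw [pow_succ, mul_inv]
              ring
    have hlinfinal : LY k ≤ ((f (x 0) + g (x 0)) - (f xstar + g xstar)
        + L / 2 * ‖v 0 - xstar‖ ^ 2) * (((1 + Real.sqrt (μ / L)) ^ (k - 1))⁻¹) := by
      have hk1 : k = 1 + (k - 1) := by omega
      have h1 := hlin2 (k - 1)
      rw [← hk1] at h1
      calc LY k ≤ LY 1 * ((1 + Real.sqrt (μ / L)) ^ (k - 1))⁻¹ := h1
        _ ≤ _ := mul_le_mul_of_nonneg_right hLYdef1 (by positivity)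
    rcases le_total (4 / (k:ℝ) ^ 2) (((1 + Real.sqrt (μ / L)) ^ (k - 1))⁻¹) with h | h
    · rw [min_eq_left h]
      have := hsubfinal
      simp only [hLYdef] at this
      exact this
    · rw [min_eq_right h]
      have := hlinfinal
      simp only [hLYdef] at this
      exact this
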